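/- In the setting above, the sequence E₁^G × E₂^G →^{p*+q*} A^G →^{μ₁∘p_*} H¹(G, Δ) is exact: an element a ∈ A^G satisfies μ₁(p_*(a)) = 0 if and only if a is in the image of (e₁, e₂) ↦ p*(e₁) + q*(e₂). -/
import Mathlib


/-- In the setting of the anti-diagonal construction with divisible `G`-modules
`E₁`, `E₂` and common `m`-torsion `Δ`, the sequence
`E₁^G × E₂^G → A^G → H¹(G, Δ)` (via `p* + q*` and then `μ₁ ∘ p_*`) is exact: an invariant
`a ∈ A^G` (represented by `x` with `g • x − x ∈ Δ_E` for all `g`) satisfies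
`μ₁(p_*(a)) = 0` (i.e. some lift `e₁'` with `m • e₁' = p_*(a) = m • x.1` has Kummer cocycle
a coboundary) if and only if `a` is in the image of `(e₁, e₂) ↦ p*(e₁) + q*(e₂)` on
invariant points, i.e. `(e₁, e₂) − x ∈ Δ_E` for some invariants `e₁`, `e₂`. -/
theorem stmt_11 (G : Type*) [Group G] (E₁ E₂ Δ : Type*)
    [AddCommGroup E₁] [AddCommGroup E₂] [AddCommGroup Δ]
    [DistribMulAction G E₁] [DistribMulAction G E₂] [DistribMulAction G Δ]
    (m : ℕ) (hm : 2 ≤ m)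
    (hdiv₁ : ∀ e : E₁, ∃ e', m • e' = e) (hdiv₂ : ∀ e : E₂, ∃ e', m • e' = e)
    (j₁ : Δ →+ E₁) (j₂ : Δ →+ E₂)
    (hj₁ : Function.Injective j₁) (hj₂ : Function.Injective j₂)
    (hj₁G : ∀ (g : G) (d : Δ), j₁ (g • d) = g • j₁ d)
    (hj₂G : ∀ (g : G) (d : Δ), j₂ (g • d) = g • j₂ d)
    (hj₁tor : ∀ e : E₁, (∃ d, j₁ d = e) ↔ m • e = 0)
    (hj₂tor : ∀ e : E₂, (∃ d, j₂ d = e) ↔ m • e = 0)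
    (ΔE : AddSubgroup (E₁ × E₂)) (hΔE : ∀ x, x ∈ ΔE ↔ ∃ d, x = (j₁ d, -j₂ d))
    (x : E₁ × E₂) (hx : ∀ g : G, g • x - x ∈ ΔE) :
    (∃ (e₁' : E₁) (δ₁ : G → Δ) (c : Δ), m • e₁' = m • x.1 ∧
        (∀ g : G, j₁ (δ₁ g) = g • e₁' - e₁') ∧ (∀ g : G, δ₁ g = g • c - c)) ↔
      ∃ (e₁ : E₁) (e₂ : E₂), (∀ g : G, g • e₁ = e₁) ∧ (∀ g : G, g • e₂ = e₂) ∧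
        (e₁, e₂) - x ∈ ΔE := by
  have hj₁zero : ∀ z : Δ, j₁ z = 0 → z = 0 := fun z h =>
    hj₁ (h.trans (map_zero j₁).symm)
  constructor
  · rintro ⟨e₁', δ₁, c, hme, hδ, hc⟩
    set e₁ : E₁ := e₁' - j₁ c with he₁
    have hinv₁ : ∀ g : G, g • e₁ = e₁ := by
      intro g
      have h1 : g • e₁' = e₁' + j₁ (δ₁ g) := by
        have := hδ g; rw [this]; abel
      have h2 : g • j₁ c = j₁ c + j₁ (δ₁ g) := by
        rw [← hj₁G g c]
        have : g • c = c + δ₁ g := by have := hc g; rw [this]; abel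
        rw [this, map_add]
      rw [he₁, smul_sub, h1, h2]; abel
    -- m • (e₁ - x.1) = 0
    have htorc : m • (j₁ c) = 0 := (hj₁tor (j₁ c)).mp ⟨c, rfl⟩
    have hmz : m • (e₁ - x.1) = 0 := by
      rw [he₁, smul_sub, smul_sub, hme, htorc]; abel
    obtain ⟨d, hd⟩ := (hj₁tor (e₁ - x.1)).mpr hmz
    refine ⟨e₁, x.2 - j₂ d, hinv₁, ?_, ?_⟩
    · intro g
      obtain ⟨dg, hdg⟩ := (hΔE _).mp (hx g)
      have hdg1 : g • x.1 - x.1 = j₁ dg := congrArg Prod.fst hdg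
      have hdg2 : g • x.2 - x.2 = -j₂ dg := congrArg Prod.snd hdg
      have he₁x : e₁ = x.1 + j₁ d := by rw [hd]; abel
      have h0 : (g • x.1 - x.1) + (g • j₁ d - j₁ d) = 0 := by
        have h := hinv₁ g
        rw [he₁x, smul_add] at h
        rw [sub_add_sub_comm, sub_eq_zero, h]
      have key : dg + (g • d - d) = 0 := by
        apply hj₁zero
        rw [map_add, map_sub, hj₁G, ← hdg1]
        exact h0
      have hgd' : g • d = -dg + d := by
        have h := eq_neg_of_add_eq_zero_left key
        rw [h]; abel
      have hx2 : g • x.2 = -j₂ dg + x.2 := by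
        rw [sub_eq_iff_eq_add] at hdg2
        exact hdg2
      rw [smul_sub, ← hj₂G, hgd', hx2, map_add, map_neg]
      abel
    · rw [hΔE]
      refine ⟨d, Prod.ext_iff.mpr ⟨by simpa using hd.symm, ?_⟩⟩
      show (x.2 - j₂ d) - x.2 = -j₂ d
      abel
  · rintro ⟨e₁, e₂, hinv₁, hinv₂, hmem⟩
    obtain ⟨d, hd⟩ := (hΔE _).mp hmem
    have hd1 : e₁ - x.1 = j₁ d := congrArg Prod.fst hd
    have htor : m • (j₁ d) = 0 := (hj₁tor (j₁ d)).mp ⟨d, rfl⟩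
    refine ⟨e₁, fun _ => 0, 0, ?_, ?_, ?_⟩
    · have : m • (e₁ - x.1) = 0 := by rw [hd1]; exact htor
      rw [smul_sub, sub_eq_zero] at this; exact this
    · intro g; rw [map_zero, hinv₁ g, sub_self]
    · intro g; rw [smul_zero, sub_self]
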